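/- Let p be a prime, let E(x) = exp(∑_{j≥0} x^{p^j}/p^j) = ∑_{m≥0} E_m x^m be the Artin–Hasse exponential series (a power series with rational coefficients), and let γ be an element of a fixed algebraic closure of ℚ_p satisfying ∑_{j≥0} γ^{p^j}/p^j = 0 and ord_p(γ) = 1/(p−1). Then for every m ≥ 0, the coefficient λ_m := E_m·γ^m of E(γx) satisfies ord_p(λ_m) ≥ m/(p−1). -/

import Mathlib

/-!
STATEMENT 3: Let `E(x) = exp(∑_{j≥0} x^{p^j}/p^j) = ∑ E_m x^m` be the Artin–Hasse
exponential and `γ` an element of a fixed algebraic closure of `ℚ_p` with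
`∑_{j≥0} γ^{p^j}/p^j = 0` and `ord_p γ = 1/(p−1)`.  Then `λ_m := E_m γ^m` satisfies
`ord_p λ_m ≥ m/(p−1)` for all `m ≥ 0`.

The formal power series `E` is defined coefficientwise: writing
`S = ∑_j x^{p^j}/p^j` (a series with zero constant term), the coefficient of `x^m`
in `exp(S) = ∑_n S^n/n!` is the finite sum `∑_{n≤m} (coeff of x^m in S^n)/n!`.
The condition `∑_j γ^{p^j}/p^j = 0` (a convergent series) is expressed by saying that
the valuations of its partial sums tend to `+∞`.
-/

open scoped BigOperators

open PowerSeries in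
/-- The series `∑_{j ≥ 0} x^{p^j} / p^j` (coefficient of `x^m` is `1/p^j` if `m = p^j`,
and `0` otherwise; note `j ≤ p^j` so the truncation is harmless). -/
noncomputable def ahLog (p : ℕ) : PowerSeries ℚ :=
  PowerSeries.mk fun m => ∑ j ∈ Finset.range (m + 1),
    if p ^ j = m then (1 : ℚ) / (p : ℚ) ^ j else 0

open PowerSeries in
/-- The Artin–Hasse exponential `E(x) = exp(ahLog p)`, defined coefficientwise. -/
noncomputable def artinHasse (p : ℕ) : PowerSeries ℚ :=
  PowerSeries.mk fun m => ∑ n ∈ Finset.range (m + 1),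
    (PowerSeries.coeff m ((ahLog p) ^ n)) / (n.factorial : ℚ)

namespace AHaux

open PowerSeries

open scoped Classical in
/-- derivative of `ahLog`. -/
noncomputable def ahD (p : ℕ) : PowerSeries ℚ :=
  PowerSeries.mk fun m => if ∃ j, p ^ j = m + 1 then 1 else 0

open scoped Classical in
noncomputable def ahF (p : ℕ) : PowerSeries ℚ :=
  PowerSeries.mk fun m => if p ∣ m then coeff (m / p) (artinHasse p) else 0

noncomputable def ahG (p : ℕ) : PowerSeries ℚ :=
  PowerSeries.mk fun m => (p : ℚ) ^ m / (m.factorial : ℚ)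

variable {p : ℕ} [hp : Fact p.Prime]

lemma coeff_ahLog_pow (j : ℕ) : coeff (p ^ j) (ahLog p) = 1 / (p : ℚ) ^ j := by
  
  have h1 : 1 < p := hp.out.one_lt
  rw [ahLog, coeff_mk, Finset.sum_eq_single j]
  · simp
  · intro b _ hbj
    exact if_neg fun hb => hbj (Nat.pow_right_injective hp.out.two_le hb)
  · intro hj
    exact absurd (Finset.mem_range.mpr (by have := Nat.lt_pow_self (n := j) h1; omega)) hj

lemma coeff_ahLog_eq_zero {m : ℕ} (h : ∀ j, p ^ j ≠ m) : coeff m (ahLog p) = 0 := by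
  
  rw [ahLog, coeff_mk]
  exact Finset.sum_eq_zero fun j _ => if_neg (h j)

lemma constantCoeff_ahLog : constantCoeff (ahLog p) = 0 := by
  
  rw [← coeff_zero_eq_constantCoeff]
  exact coeff_ahLog_eq_zero fun j => (Nat.pos_of_ne_zero (pow_ne_zero j hp.out.pos.ne')).ne'


lemma coeff_pow_ahLog_eq_zero {m n : ℕ} (h : m < n) : coeff m (ahLog p ^ n) = 0 := by
  
  have hX : (X : PowerSeries ℚ) ^ n ∣ ahLog p ^ n :=
    pow_dvd_pow_of_dvd (X_dvd_iff.mpr constantCoeff_ahLog) n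
  exact X_pow_dvd_iff.mp hX m h

lemma derivative_ahLog : d⁄dX ℚ (ahLog p) = ahD p := by
  
  classical
  ext m
  rw [coeff_derivative, ahD, coeff_mk]
  by_cases h : ∃ j, p ^ j = m + 1
  · obtain ⟨j, hj⟩ := h
    rw [if_pos ⟨j, hj⟩, ← hj, coeff_ahLog_pow]
    have hne : ((p : ℚ)) ^ j ≠ 0 := by
      have := hp.out.pos; positivity
    have hc : ((m : ℚ) + 1) = (p : ℚ) ^ j := by exact_mod_cast hj.symm
    rw [hc, one_div, inv_mul_cancel₀ hne]
  · rw [coeff_ahLog_eq_zero fun j hj => h ⟨j, hj⟩, zero_mul]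
    exact (if_neg h).symm

lemma coeff_artinHasse_zero : coeff 0 (artinHasse p) = 1 := by
  
  rw [artinHasse, coeff_mk, Finset.sum_range_one]
  simp

lemma coeff_ahD_mul (f : PowerSeries ℚ) (m : ℕ) :
    coeff m (ahD p * f) = ∑ j ∈ Finset.range (m + 2),
      if p ^ j ≤ m + 1 then coeff (m + 1 - p ^ j) f else 0 := by
  
  classical
  have h1 : 1 < p := hp.out.one_lt
  rw [coeff_mul]
  have L : ∀ x : ℕ × ℕ, (coeff x.1) (ahD p) * (coeff x.2) f
      = if ∃ j, p ^ j = x.1 + 1 then coeff x.2 f else 0 := by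
    intro x; rw [ahD, coeff_mk, boole_mul]
  simp_rw [L]
  rw [← Finset.sum_filter, ← Finset.sum_filter]
  refine Finset.sum_nbij' (i := fun x : ℕ × ℕ => Nat.log p (x.1 + 1))
    (j := fun j : ℕ => (p ^ j - 1, m + 1 - p ^ j)) ?_ ?_ ?_ ?_ ?_
  · rintro ⟨a, b⟩ hx
    rw [Finset.mem_filter, Finset.HasAntidiagonal.mem_antidiagonal] at hx
    obtain ⟨hab, j, hj⟩ := hx
    simp only at hab hj
    rw [Finset.mem_filter, Finset.mem_range]
    dsimp only
    have hlog : Nat.log p (a + 1) = j := by rw [← hj, Nat.log_pow h1]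
    rw [hlog]
    have := Nat.lt_pow_self (n := j) h1
    omega
  · intro j hj
    rw [Finset.mem_filter, Finset.mem_range] at hj
    rw [Finset.mem_filter, Finset.HasAntidiagonal.mem_antidiagonal]
    dsimp only
    have hpos : 1 ≤ p ^ j := Nat.one_le_pow _ _ hp.out.pos
    exact ⟨by omega, j, by omega⟩
  · rintro ⟨a, b⟩ hx
    rw [Finset.mem_filter, Finset.HasAntidiagonal.mem_antidiagonal] at hx
    obtain ⟨hab, j, hj⟩ := hx
    simp only at hab hj
    dsimp only
    have hlog : Nat.log p (a + 1) = j := by rw [← hj, Nat.log_pow h1]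
    rw [hlog]
    exact Prod.ext (by omega) (by omega)
  · intro j hj
    rw [Finset.mem_filter, Finset.mem_range] at hj
    have hpos : 1 ≤ p ^ j := Nat.one_le_pow _ _ hp.out.pos
    dsimp only
    rw [Nat.sub_add_cancel hpos, Nat.log_pow h1]
  · rintro ⟨a, b⟩ hx
    rw [Finset.mem_filter, Finset.HasAntidiagonal.mem_antidiagonal] at hx
    obtain ⟨hab, j, hj⟩ := hx
    simp only at hab hj
    dsimp only
    have hlog : Nat.log p (a + 1) = j := by rw [← hj, Nat.log_pow h1]
    have hb : b = m + 1 - p ^ j := by omega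
    rw [hlog, hb]

lemma derivative_artinHasse : d⁄dX ℚ (artinHasse p) = ahD p * artinHasse p := by
  ext m
  rw [coeff_derivative]
  have key : coeff (m + 1) (artinHasse p) * ((m : ℚ) + 1)
      = ∑ k ∈ Finset.range (m + 1), coeff m (ahD p * ahLog p ^ k) / (k.factorial : ℚ) := by
    rw [artinHasse, coeff_mk, Finset.sum_mul, Finset.sum_range_succ']
    have h0 : coeff (m + 1) (ahLog p ^ 0) / (Nat.factorial 0 : ℚ) * ((m : ℚ) + 1) = 0 := by
      simp
    rw [h0, add_zero]
    refine Finset.sum_congr rfl fun i _ => ?_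
    have hD : coeff m (d⁄dX ℚ (ahLog p ^ (i + 1)))
        = ((i : ℚ) + 1) * coeff m (ahLog p ^ i * d⁄dX ℚ (ahLog p)) := by
      rw [Derivation.leibniz_pow, Nat.add_sub_cancel, smul_eq_mul, map_nsmul, nsmul_eq_mul]
      push_cast
      ring
    have hcd : coeff (m + 1) (ahLog p ^ (i + 1)) * ((m : ℚ) + 1)
        = coeff m (d⁄dX ℚ (ahLog p ^ (i + 1))) := (coeff_derivative _ _).symm
    rw [div_mul_eq_mul_div, hcd, hD, derivative_ahLog, mul_comm (ahLog p ^ i)]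
    have hf : ((i.factorial : ℚ)) ≠ 0 := by exact_mod_cast i.factorial_ne_zero
    have hi1 : ((i : ℚ) + 1) ≠ 0 := by positivity
    rw [Nat.factorial_succ]
    push_cast
    field_simp
  rw [key]
  have hEb : ∀ x : ℕ × ℕ, x ∈ Finset.HasAntidiagonal.antidiagonal m →
      coeff x.2 (artinHasse p)
        = ∑ n ∈ Finset.range (m + 1), coeff x.2 (ahLog p ^ n) / (n.factorial : ℚ) := by
    intro x hx
    rw [Finset.HasAntidiagonal.mem_antidiagonal] at hx
    rw [artinHasse, coeff_mk]
    apply Finset.sum_subset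
    · exact Finset.range_subset_range.mpr (by omega)
    · intro n _ hn
      rw [Finset.mem_range, not_lt] at hn
      rw [coeff_pow_ahLog_eq_zero (by omega), zero_div]
  have step1 : coeff m (ahD p * artinHasse p)
      = ∑ x ∈ Finset.HasAntidiagonal.antidiagonal m, ∑ n ∈ Finset.range (m + 1),
          coeff x.1 (ahD p) * (coeff x.2 (ahLog p ^ n) / (n.factorial : ℚ)) := by
    rw [coeff_mul]
    refine Finset.sum_congr rfl fun x hx => ?_
    rw [hEb x hx, Finset.mul_sum]
  rw [step1, Finset.sum_comm]
  refine Finset.sum_congr rfl fun n _ => ?_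
  rw [coeff_mul, Finset.sum_div]
  refine Finset.sum_congr rfl fun x _ => ?_
  rw [mul_div_assoc]

lemma ode_unique {h y z : PowerSeries ℚ} (hy : d⁄dX ℚ y = h * y) (hz : d⁄dX ℚ z = h * z)
    (h0 : constantCoeff y = constantCoeff z) : y = z := by
  ext m
  induction m using Nat.strong_induction_on with
  | _ m ih =>
    match m with
    | 0 => simpa only [coeff_zero_eq_constantCoeff] using h0
    | Nat.succ n =>
      have e1 : coeff n (d⁄dX ℚ y) = coeff n (d⁄dX ℚ z) := by
        rw [hy, hz, coeff_mul, coeff_mul]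
        refine Finset.sum_congr rfl fun x hx => ?_
        rw [Finset.HasAntidiagonal.mem_antidiagonal] at hx
        rw [ih x.2 (by omega)]
      rw [coeff_derivative, coeff_derivative] at e1
      have hne : ((n : ℚ) + 1) ≠ 0 := by positivity
      exact mul_right_cancel₀ hne e1

lemma derivative_ahG : d⁄dX ℚ (ahG p) = C (p : ℚ) * ahG p := by
  ext m
  rw [coeff_derivative, coeff_C_mul, ahG, coeff_mk, coeff_mk, Nat.factorial_succ, pow_succ]
  have h1 : ((m.factorial : ℚ)) ≠ 0 := by exact_mod_cast m.factorial_ne_zero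
  have h2 : ((m : ℚ) + 1) ≠ 0 := by positivity
  push_cast
  field_simp

lemma derivative_ahF : d⁄dX ℚ (ahF p) = C (p : ℚ) * ((ahD p - 1) * ahF p) := by
  classical
  have h1 : 1 < p := hp.out.one_lt
  ext m
  rw [coeff_derivative, coeff_C_mul, sub_mul, one_mul, map_sub, coeff_ahD_mul,
    Finset.sum_range_succ']
  have hj0 : (if p ^ 0 ≤ m + 1 then coeff (m + 1 - p ^ 0) (ahF p) else 0)
      = coeff m (ahF p) := by
    rw [if_pos (by simp)]
    norm_num
  rw [hj0, add_sub_cancel_right]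
  conv_lhs => rw [ahF, coeff_mk]
  by_cases hdvd : p ∣ (m + 1)
  · obtain ⟨s, hs⟩ := hdvd
    obtain ⟨t, rfl⟩ : ∃ t, s = t + 1 := by
      cases s with
      | zero => omega
      | succ t => exact ⟨t, rfl⟩
    have hdiv : (m + 1) / p = t + 1 := by rw [hs, Nat.mul_div_cancel_left _ hp.out.pos]
    rw [if_pos ⟨t + 1, hs⟩, hdiv]
    -- E recursion at t+1
    have hrec := congrArg (coeff t) (derivative_artinHasse (p := p))
    rw [coeff_derivative, coeff_ahD_mul] at hrec
    -- transform each summand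
    have hterm : ∀ j ∈ Finset.range (m + 1),
        (if p ^ (j + 1) ≤ m + 1 then coeff (m + 1 - p ^ (j + 1)) (ahF p) else 0)
          = (if p ^ j ≤ t + 1 then coeff (t + 1 - p ^ j) (artinHasse p) else 0) := by
      intro j _
      by_cases hle : p ^ j ≤ t + 1
      · have hle' : p ^ (j + 1) ≤ m + 1 := by
          rw [hs, pow_succ']
          exact Nat.mul_le_mul_left p hle
        rw [if_pos hle', if_pos hle, ahF, coeff_mk]
        have hsub : m + 1 - p ^ (j + 1) = p * (t + 1 - p ^ j) := by
          rw [hs, pow_succ', Nat.mul_sub]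
        rw [hsub, if_pos (Dvd.intro _ rfl), Nat.mul_div_cancel_left _ hp.out.pos]
      · have hle' : ¬ p ^ (j + 1) ≤ m + 1 := by
          rw [hs, pow_succ']
          intro hcon
          exact hle (Nat.le_of_mul_le_mul_left hcon hp.out.pos)
        rw [if_neg hle', if_neg hle]
    rw [Finset.sum_congr rfl hterm]
    have hext : ∑ j ∈ Finset.range (m + 1),
        (if p ^ j ≤ t + 1 then coeff (t + 1 - p ^ j) (artinHasse p) else 0)
          = ∑ j ∈ Finset.range (t + 2),
        (if p ^ j ≤ t + 1 then coeff (t + 1 - p ^ j) (artinHasse p) else 0) := by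
      symm
      apply Finset.sum_subset
      · apply Finset.range_subset_range.mpr
        have : 2 * (t + 1) ≤ p * (t + 1) := Nat.mul_le_mul_right _ hp.out.two_le
        omega
      · intro j _ hj
        rw [Finset.mem_range, not_lt] at hj
        have := Nat.lt_pow_self (n := j) h1
        rw [if_neg (by omega)]
    rw [hext, ← hrec]
    have hcast : ((m : ℚ) + 1) = (p : ℚ) * ((t : ℚ) + 1) := by exact_mod_cast hs
    rw [hcast]
    ring
  · rw [if_neg hdvd, zero_mul]
    rw [Finset.sum_eq_zero, mul_zero]
    intro j _
    by_cases hle : p ^ (j + 1) ≤ m + 1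
    · rw [if_pos hle, ahF, coeff_mk, if_neg, ]
      intro hd
      apply hdvd
      have hp2 : p ∣ p ^ (j + 1) := dvd_pow_self p (Nat.succ_ne_zero j)
      have : m + 1 = (m + 1 - p ^ (j + 1)) + p ^ (j + 1) := by omega
      rw [this]
      exact Nat.dvd_add hd hp2
    · rw [if_neg hle]

lemma artinHasse_pow_p : artinHasse p ^ p = ahF p * ahG p := by
  refine ode_unique (h := C (p : ℚ) * ahD p) ?_ ?_ ?_
  · rw [Derivation.leibniz_pow, derivative_artinHasse, smul_eq_mul, nsmul_eq_mul]
    have hE : artinHasse p ^ (p - 1) * artinHasse p = artinHasse p ^ p := by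
      rw [← pow_succ]
      congr 1
      have := hp.out.pos
      omega
    rw [show ((p : ℕ) : PowerSeries ℚ) = C (p : ℚ) from (map_natCast (C (R := ℚ)) p).symm, ← hE]
    ring
  · rw [Derivation.leibniz, smul_eq_mul, smul_eq_mul, derivative_ahF, derivative_ahG]
    ring
  · rw [map_pow, map_mul]
    have hE0 : constantCoeff (artinHasse p) = 1 := by
      rw [← coeff_zero_eq_constantCoeff_apply, coeff_artinHasse_zero]
    have hF0 : constantCoeff (ahF p) = 1 := by
      rw [← coeff_zero_eq_constantCoeff_apply, ahF, coeff_mk, if_pos (dvd_zero p),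
        Nat.zero_div, coeff_artinHasse_zero]
    have hG0 : constantCoeff (ahG p) = 1 := by
      rw [← coeff_zero_eq_constantCoeff_apply, ahG, coeff_mk]
      simp
    rw [hE0, hF0, hG0, one_pow, one_mul]

lemma padicValNat_factorial_lt {b : ℕ} (hb : b ≠ 0) : padicValNat p b.factorial < b := by
  induction b using Nat.strong_induction_on with
  | _ b ih =>
    have h2 : 2 ≤ p := hp.out.two_le
    have key : padicValNat p b.factorial = padicValNat p (b / p).factorial + b / p := by
      conv_lhs => rw [← padicValNat_mul_div_factorial (p := p) b]
      rw [padicValNat_factorial_mul]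
    by_cases hq : b / p = 0
    · rw [key, hq]
      have := Nat.pos_of_ne_zero hb
      simp [padicValNat.one]
      omega
    · have hlt : b / p < b := Nat.div_lt_self (Nat.pos_of_ne_zero hb) hp.out.one_lt
      have hih := ih (b / p) hlt hq
      have hple : p * (b / p) ≤ b := Nat.mul_div_le b p
      have : 2 * (b / p) ≤ p * (b / p) := Nat.mul_le_mul_right _ h2
      omega

lemma norm_coeff_ahG_le {b : ℕ} (hb : b ≠ 0) :
    ‖((coeff b (ahG p) : ℚ) : ℚ_[p])‖ ≤ (p : ℝ)⁻¹ := by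
  have hp1 : (1 : ℝ) < p := by exact_mod_cast hp.out.one_lt
  have hp0 : (0 : ℝ) < p := by linarith
  rw [ahG, coeff_mk]
  have hcast : ((((p : ℚ) ^ b / (b.factorial : ℚ)) : ℚ) : ℚ_[p])
      = (p : ℚ_[p]) ^ b / (b.factorial : ℚ_[p]) := by push_cast; ring
  rw [hcast, norm_div, norm_pow, Padic.norm_p]
  have hfne : ((b.factorial : ℚ_[p])) ≠ 0 := by
    exact_mod_cast b.factorial_ne_zero
  rw [Padic.norm_eq_zpow_neg_valuation hfne, Padic.valuation_natCast]
  have hν : (padicValNat p b.factorial : ℤ) ≤ (b : ℤ) - 1 := by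
    have := padicValNat_factorial_lt (p := p) hb
    omega
  have hpne : (p : ℝ) ≠ 0 := ne_of_gt hp0
  rw [inv_pow, ← zpow_natCast (p : ℝ) b, ← zpow_neg, div_eq_mul_inv, ← zpow_neg,
    ← zpow_add₀ hpne, show ((p : ℝ))⁻¹ = (p : ℝ) ^ (-1 : ℤ) by rw [zpow_neg_one]]
  apply zpow_le_zpow_right₀ (le_of_lt hp1)
  omega

lemma norm_coeff_artinHasse_le (n : ℕ) :
    ‖((coeff n (artinHasse p) : ℚ) : ℚ_[p])‖ ≤ 1 := by
  induction n using Nat.strong_induction_on with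
  | _ n ih =>
  rcases Nat.eq_zero_or_pos n with rfl | hn
  · rw [coeff_artinHasse_zero]
    norm_num
  have hn' : n ≠ 0 := hn.ne'
  have h1 : 1 < p := hp.out.one_lt
  have hp0 : (0 : ℝ) < p := by exact_mod_cast hp.out.pos
  set e : ℕ → ℚ_[p] := fun k => ((coeff k (artinHasse p) : ℚ) : ℚ_[p]) with he
  have he0 : e 0 = 1 := by
    rw [he]
    simp only []
    rw [coeff_artinHasse_zero]
    norm_num
  have ihe : ∀ k, k < n → ‖e k‖ ≤ 1 := fun k hk => ih k hk
  set ε : ℕ → ℤ_[p] := fun k => if h : k < n then ⟨e k, ihe k h⟩ else 0 with hε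
  have hεe : ∀ k, k < n → ((ε k : ℤ_[p]) : ℚ_[p]) = e k := by
    intro k hk
    simp [hε, hk]
  set T' : Polynomial ℤ_[p] := ∑ i ∈ Finset.range n, Polynomial.C (ε i) * Polynomial.X ^ i
    with hT'
  have coeff_T' : ∀ k, T'.coeff k = ε k := by
    intro k
    rw [hT', Polynomial.finset_sum_coeff]
    simp only [Polynomial.coeff_C_mul, Polynomial.coeff_X_pow, mul_ite, mul_one, mul_zero]
    rw [Finset.sum_ite_eq (Finset.range n) k ε]
    by_cases hk : k < n
    · rw [if_pos (Finset.mem_range.mpr hk)]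
    · rw [if_neg (by simpa using hk)]
      simp [hε, hk]
  set Tq : Polynomial ℚ_[p] := T'.map (PadicInt.Coe.ringHom) with hTq
  have coeff_Tq : ∀ k, Tq.coeff k = if k < n then e k else 0 := by
    intro k
    rw [hTq, Polynomial.coeff_map, coeff_T']
    by_cases hk : k < n
    · rw [if_pos hk, ← hεe k hk]
      rfl
    · rw [if_neg hk]
      simp [hε, hk]
  set A : PowerSeries ℚ_[p] := PowerSeries.map (Rat.castHom ℚ_[p]) (artinHasse p) with hA
  have coeff_A : ∀ k, coeff k A = e k := fun k => by
    rw [hA, PowerSeries.coeff_map]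
    rfl
  -- Step (i)
  set W : PowerSeries ℚ_[p] :=
    ∑ i ∈ Finset.range p, A ^ i * ((Tq : PowerSeries ℚ_[p])) ^ (p - 1 - i) with hW
  have hmem0 : ((0, n) : ℕ × ℕ) ∈ Finset.HasAntidiagonal.antidiagonal n := by
    rw [Finset.HasAntidiagonal.mem_antidiagonal]
    omega
  have hW0 : coeff 0 W = p := by
    rw [hW, map_sum]
    have hterm : ∀ i ∈ Finset.range p,
        coeff 0 (A ^ i * ((Tq : PowerSeries ℚ_[p])) ^ (p - 1 - i)) = 1 := by
      intro i _
      rw [coeff_zero_eq_constantCoeff_apply, map_mul, map_pow, map_pow]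
      have hcA : constantCoeff A = 1 := by
        rw [← coeff_zero_eq_constantCoeff_apply, coeff_A, he0]
      have hcT : constantCoeff ((Tq : PowerSeries ℚ_[p])) = 1 := by
        rw [← coeff_zero_eq_constantCoeff_apply, Polynomial.coeff_coe, coeff_Tq, if_pos hn, he0]
      rw [hcA, hcT, one_pow, one_pow, one_mul]
    rw [Finset.sum_congr rfl hterm, Finset.sum_const, Finset.card_range, nsmul_eq_mul, mul_one]
  have hsub : coeff n (A - (Tq : PowerSeries ℚ_[p])) = e n := by
    rw [map_sub, coeff_A, Polynomial.coeff_coe, coeff_Tq, if_neg (lt_irrefl n), sub_zero]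
  have hsum : (∑ x ∈ Finset.HasAntidiagonal.antidiagonal n,
      coeff x.1 W * coeff x.2 (A - (Tq : PowerSeries ℚ_[p])))
        = coeff 0 W * coeff n (A - (Tq : PowerSeries ℚ_[p])) := by
    refine Finset.sum_eq_single (0, n) ?_ ?_
    · rintro ⟨a, b⟩ hx hne
      rw [Finset.HasAntidiagonal.mem_antidiagonal] at hx
      simp only at hx ⊢
      have hb : b < n := by
        rcases Nat.lt_or_ge b n with h | h
        · exact h
        · exfalso
          apply hne
          have hb' : b = n := by omega
          have ha' : a = 0 := by omega
          rw [ha', hb']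
      have hz : coeff b (A - (Tq : PowerSeries ℚ_[p])) = 0 := by
        rw [map_sub, coeff_A, Polynomial.coeff_coe, coeff_Tq, if_pos hb, sub_self]
      rw [hz, mul_zero]
    · intro hx
      exact absurd hmem0 hx
  have hi : coeff n (A ^ p) = (Tq ^ p).coeff n + (p : ℚ_[p]) * e n := by
    have h2 := congrArg (coeff n) (geom_sum₂_mul A ((Tq : PowerSeries ℚ_[p])) p)
    rw [← hW] at h2
    rw [coeff_mul, hsum, hW0, hsub, map_sub] at h2
    have hTp : coeff n (((Tq : PowerSeries ℚ_[p])) ^ p) = (Tq ^ p).coeff n := by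
      rw [← Polynomial.coe_pow, Polynomial.coeff_coe]
    rw [hTp] at h2
    linear_combination -h2
  -- Step (ii): Frobenius congruence
  have hfrob : ‖(Tq ^ p).coeff n - (if p ∣ n then e (n / p) else 0)‖ ≤ (p : ℝ)⁻¹ := by
    have hzmod : (T' ^ p - Polynomial.expand ℤ_[p] p T').map (PadicInt.toZMod) = 0 := by
      rw [Polynomial.map_sub, Polynomial.map_pow, Polynomial.map_expand]
      have h3 : (T'.map (PadicInt.toZMod)) ^ p
          = Polynomial.expand (ZMod p) p (T'.map (PadicInt.toZMod)) := by
        rw [← Polynomial.map_frobenius_expand, ZMod.frobenius_zmod, Polynomial.map_id]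
      rw [← h3, sub_self]
    have hker : PadicInt.toZMod ((T' ^ p - Polynomial.expand ℤ_[p] p T').coeff n) = 0 := by
      rw [← Polynomial.coeff_map, hzmod, Polynomial.coeff_zero]
    have hdvd : (p : ℤ_[p]) ∣ (T' ^ p - Polynomial.expand ℤ_[p] p T').coeff n := by
      have hmem : (T' ^ p - Polynomial.expand ℤ_[p] p T').coeff n
          ∈ RingHom.ker (PadicInt.toZMod (p := p)) := hker
      rwa [PadicInt.ker_toZMod, PadicInt.maximalIdeal_eq_span_p,
        Ideal.mem_span_singleton] at hmem
    obtain ⟨c, hc⟩ := hdvd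
    have hnorm : ‖(T' ^ p - Polynomial.expand ℤ_[p] p T').coeff n‖ ≤ (p : ℝ)⁻¹ := by
      rw [hc, norm_mul, PadicInt.norm_p]
      calc (p : ℝ)⁻¹ * ‖c‖ ≤ (p : ℝ)⁻¹ * 1 :=
            mul_le_mul_of_nonneg_left c.norm_le_one (by positivity)
        _ = (p : ℝ)⁻¹ := mul_one _
    have heq : (Tq ^ p).coeff n - (if p ∣ n then e (n / p) else 0)
        = (((T' ^ p - Polynomial.expand ℤ_[p] p T').coeff n : ℤ_[p]) : ℚ_[p]) := by
      rw [Polynomial.coeff_sub, PadicInt.coe_sub]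
      congr 1
      · rw [hTq, ← Polynomial.map_pow, Polynomial.coeff_map]
        rfl
      · rw [Polynomial.coeff_expand hp.out.pos, coeff_T',
          apply_ite (fun x : ℤ_[p] => ((x : ℚ_[p])))]
        by_cases hd : p ∣ n
        · rw [if_pos hd, if_pos hd]
          exact (hεe _ (Nat.div_lt_self hn h1)).symm
        · rw [if_neg hd, if_neg hd]
          norm_num
    rw [heq, ← PadicInt.norm_def]
    exact hnorm
  -- Step (iii)
  set Fq : PowerSeries ℚ_[p] := PowerSeries.map (Rat.castHom ℚ_[p]) (ahF p) with hFq
  set Gq : PowerSeries ℚ_[p] := PowerSeries.map (Rat.castHom ℚ_[p]) (ahG p) with hGq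
  have hAFG : A ^ p = Fq * Gq := by
    rw [hA, hFq, hGq, ← map_pow, artinHasse_pow_p, map_mul]
  have coeff_Fq : ∀ k, coeff k Fq = if p ∣ k then e (k / p) else 0 := by
    intro k
    rw [hFq, PowerSeries.coeff_map, ahF, coeff_mk]
    by_cases hd : p ∣ k
    · rw [if_pos hd, if_pos hd]
      rfl
    · rw [if_neg hd, if_neg hd, map_zero]
  have hG0 : coeff 0 Gq = 1 := by
    rw [hGq, PowerSeries.coeff_map, ahG, coeff_mk]
    norm_num
  have hFnorm : ∀ k, k < n → ‖coeff k Fq‖ ≤ 1 := by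
    intro k hk
    rw [coeff_Fq]
    by_cases hd : p ∣ k
    · rw [if_pos hd]
      exact ihe (k / p) (lt_of_le_of_lt (Nat.div_le_self k p) hk)
    · rw [if_neg hd]
      simp
  have hGnorm : ∀ k, k ≠ 0 → ‖coeff k Gq‖ ≤ (p : ℝ)⁻¹ := by
    intro k hk
    rw [hGq, PowerSeries.coeff_map]
    exact norm_coeff_ahG_le hk
  have hmemn : ((n, 0) : ℕ × ℕ) ∈ Finset.HasAntidiagonal.antidiagonal n := by
    simp
  have hsplit : coeff n (Fq * Gq)
      = coeff n Fq * coeff 0 Gq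
        + ∑ x ∈ (Finset.HasAntidiagonal.antidiagonal n).erase (n, 0),
            coeff x.1 Fq * coeff x.2 Gq := by
    rw [coeff_mul, ← Finset.add_sum_erase _ _ hmemn]
  have hRnorm : ‖∑ x ∈ (Finset.HasAntidiagonal.antidiagonal n).erase (n, 0),
      coeff x.1 Fq * coeff x.2 Gq‖ ≤ (p : ℝ)⁻¹ := by
    apply IsUltrametricDist.norm_sum_le_of_forall_le_of_nonneg (by positivity)
    rintro ⟨a, b⟩ hx
    have hxa := Finset.mem_of_mem_erase hx
    rw [Finset.HasAntidiagonal.mem_antidiagonal] at hxa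
    have hxne := Finset.ne_of_mem_erase hx
    simp only at hxa ⊢
    have hb0 : b ≠ 0 := by
      intro h0
      apply hxne
      rw [h0] at hxa ⊢
      rw [show a = n by omega]
    have ha : a < n := by omega
    rw [norm_mul]
    calc ‖coeff a Fq‖ * ‖coeff b Gq‖ ≤ 1 * (p : ℝ)⁻¹ :=
        mul_le_mul (hFnorm _ ha) (hGnorm _ hb0) (norm_nonneg _) zero_le_one
      _ = (p : ℝ)⁻¹ := one_mul _
  -- assemble
  have hkey : (p : ℚ_[p]) * e n
      = ((if p ∣ n then e (n / p) else 0) - (Tq ^ p).coeff n)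
        + ∑ x ∈ (Finset.HasAntidiagonal.antidiagonal n).erase (n, 0),
            coeff x.1 Fq * coeff x.2 Gq := by
    have h4 : coeff n (A ^ p) = coeff n (Fq * Gq) := by rw [hAFG]
    rw [hi, hsplit, coeff_Fq, hG0, mul_one] at h4
    linear_combination h4
  have hfinal : ‖(p : ℚ_[p]) * e n‖ ≤ (p : ℝ)⁻¹ := by
    rw [hkey]
    refine le_trans (Padic.nonarchimedean _ _) (max_le ?_ hRnorm)
    rw [← norm_neg, neg_sub]
    exact hfrob
  rw [norm_mul, Padic.norm_p] at hfinal
  have hinv : (0 : ℝ) < (p : ℝ)⁻¹ := by positivity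
  have hEn : ‖e n‖ ≤ 1 := by
    refine le_of_mul_le_mul_left ?_ hinv
    rw [mul_one]
    exact hfinal
  exact hEn

end AHaux

theorem artinHasse_coeff_valuation_bound
    (p : ℕ) [hp : Fact (Nat.Prime p)]
    (v : AlgebraicClosure ℚ_[p] → WithTop ℝ)
    (hv0 : ∀ x, v x = ⊤ ↔ x = 0)
    (hv_mul : ∀ x y, v (x * y) = v x + v y)
    (hv_add : ∀ x y, min (v x) (v y) ≤ v (x + y))
    (hv_ext : ∀ x : ℚ_[p], x ≠ 0 →
      v (algebraMap ℚ_[p] (AlgebraicClosure ℚ_[p]) x) = ((x.valuation : ℝ) : WithTop ℝ))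
    (γ : AlgebraicClosure ℚ_[p])
    (hγ : v γ = ((1 / (p - 1) : ℝ) : WithTop ℝ))
    (hγroot : ∀ C : ℝ, ∃ N : ℕ, ∀ n ≥ N,
      (C : WithTop ℝ) <
        v (∑ j ∈ Finset.range n, γ ^ (p ^ j) / (p : AlgebraicClosure ℚ_[p]) ^ j)) :
    ∀ m : ℕ,
      (((m : ℝ) / (p - 1) : ℝ) : WithTop ℝ) ≤
        v (((PowerSeries.coeff m (artinHasse p) : ℚ) : AlgebraicClosure ℚ_[p]) * γ ^ m) := by
  intro m
  have hp2 : (2 : ℝ) ≤ p := by exact_mod_cast hp.out.two_le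
  have hpm1 : (0 : ℝ) < (p : ℝ) - 1 := by linarith
  -- v 1 = 0
  have hv1 : v 1 = 0 := by
    have h := hv_mul 1 1
    rw [mul_one] at h
    have hne : v 1 ≠ ⊤ := fun ht => one_ne_zero ((hv0 1).mp ht)
    obtain ⟨a, ha⟩ := WithTop.ne_top_iff_exists.mp hne
    rw [← ha, ← WithTop.coe_add] at h
    have ha' : a = a + a := WithTop.coe_inj.mp h
    have : a = 0 := by linarith
    rw [← ha, this, WithTop.coe_zero]
  have hvpow : ∀ k : ℕ, v (γ ^ k) = (((k : ℝ) / ((p : ℝ) - 1) : ℝ) : WithTop ℝ) := by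
    intro k
    induction k with
    | zero =>
      rw [pow_zero, hv1]
      norm_num
    | succ k ihk =>
      rw [pow_succ, hv_mul, ihk, hγ, ← WithTop.coe_add]
      congr 1
      push_cast
      rw [← add_div]
  by_cases hq : PowerSeries.coeff m (artinHasse p) = 0
  · rw [hq, Rat.cast_zero, zero_mul, (hv0 0).mpr rfl]
    exact le_top
  · set q := PowerSeries.coeff m (artinHasse p) with hqdef
    have hqp : ((q : ℚ) : ℚ_[p]) ≠ 0 := Rat.cast_ne_zero.mpr hq
    have hval : 0 ≤ ((q : ℚ) : ℚ_[p]).valuation :=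
      (Padic.norm_le_one_iff_val_nonneg _).mp (AHaux.norm_coeff_artinHasse_le m)
    have hcast : ((q : ℚ) : AlgebraicClosure ℚ_[p])
        = algebraMap ℚ_[p] (AlgebraicClosure ℚ_[p]) ((q : ℚ) : ℚ_[p]) :=
      (map_ratCast _ q).symm
    rw [hcast, hv_mul, hv_ext _ hqp, hvpow m, ← WithTop.coe_add, WithTop.coe_le_coe]
    have h0 : (0 : ℝ) ≤ (((q : ℚ) : ℚ_[p]).valuation : ℝ) := by exact_mod_cast hval
    linarith
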